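/- Let K be a totally real number field of degree n over ℚ with integral basis α₁,…,αₙ and real embeddings σ₁,…,σₙ. Then there exists (x₁,…,xₙ) ∈ ℤⁿ \ {0} such that α = x₁α₁ + ··· + xₙαₙ satisfies |σ₁(α)| < 1 and |σⱼ(α)| ≤ |D_K|^{1/(2n−2)} for j = 2,…,n; for such α one has α ∉ ℤ. -/

import Mathlib

open NumberField IntermediateField NumberField.InfinitePlace MeasureTheory
open scoped NNReal ENNReal

lemma stepA (K : Type*) [Field K] [NumberField K] (hreal : ∀ w : InfinitePlace K, InfinitePlace.IsReal w)
    (g : InfinitePlace K → ℝ≥0)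
    (hg : NNReal.sqrt ‖NumberField.discr K‖₊ < ∏ w, g w) :
    ∃ a : 𝓞 K, a ≠ 0 ∧ ∀ w : InfinitePlace K, w a < g w := by
  apply NumberField.mixedEmbedding.exists_ne_zero_mem_ringOfIntegers_lt (f := g)
  have hc0 : nrComplexPlaces K = 0 := by
    simp only [nrComplexPlaces, Fintype.card_eq_zero_iff]
    exact ⟨fun w => (not_isReal_iff_isComplex.mpr w.2) (hreal w.1)⟩
  rw [NumberField.mixedEmbedding.convexBodyLT_volume, NumberField.mixedEmbedding.minkowskiBound,
    NumberField.mixedEmbedding.volume_fundamentalDomain_fractionalIdealLatticeBasis,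
    NumberField.mixedEmbedding.volume_fundamentalDomain_latticeBasis]
  have hmult : ∀ w : InfinitePlace K, mult w = 1 := fun w => by
    simp [InfinitePlace.mult, hreal w]
  have hfr : Module.finrank ℝ (NumberField.mixedEmbedding.mixedSpace K) = nrRealPlaces K := by
    rw [NumberField.mixedEmbedding.finrank, ← card_add_two_mul_card_eq_rank, hc0, mul_zero,
      add_zero]
  simp only [Units.val_one, FractionalIdeal.absNorm_one, Rat.cast_one, ENNReal.ofReal_one,
    one_mul, hc0, pow_zero, hfr]
  simp only [NumberField.mixedEmbedding.convexBodyLTFactor, hc0, pow_zero, mul_one]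
  simp_rw [hmult, pow_one]
  rw [show ((2:ℝ≥0∞) ^ nrRealPlaces K) = (((2:ℝ≥0) ^ nrRealPlaces K : ℝ≥0) : ℝ≥0∞) by
      push_cast; rfl,
    ← ENNReal.coe_mul, ← ENNReal.coe_mul, ENNReal.coe_lt_coe, mul_comm (NNReal.sqrt _)]
  exact mul_lt_mul_of_pos_left hg (by positivity)

theorem minkowski_small_element_totally_real
    (K : Type*) [Field K] [NumberField K]
    (n : ℕ) (hn : Module.finrank ℚ K = n) (hn2 : 2 ≤ n)
    (htr : ∀ φ : K →+* ℂ, NumberField.ComplexEmbedding.IsReal φ)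
    (b : Module.Basis (Fin n) ℤ (NumberField.RingOfIntegers K))
    (σ : Fin n → (K →+* ℝ)) (hσ : Function.Injective σ) :
    ∃ x : Fin n → ℤ, x ≠ 0 ∧
      |σ ⟨0, by omega⟩ (∑ i, x i • ((b i : K)))| < 1 ∧
      (∀ j : Fin n, j ≠ ⟨0, by omega⟩ →
        |σ j (∑ i, x i • ((b i : K)))| ≤
          |(NumberField.discr K : ℝ)| ^ ((1 : ℝ) / (2 * n - 2))) ∧
      (∀ m : ℤ, (∑ i, x i • ((b i : K))) ≠ (m : K)) := by
  classical
  set j₀ : Fin n := ⟨0, by omega⟩ with hj₀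
  set φ : Fin n → (K →+* ℂ) := fun j => (Complex.ofRealHom : ℝ →+* ℂ).comp (σ j) with hφ
  have hφinj : Function.Injective φ := by
    intro i j h
    apply hσ
    ext x
    have := DFunLike.congr_fun h x
    simpa [hφ, Complex.ofReal_inj] using this
  set e : Fin n → InfinitePlace K := fun j => InfinitePlace.mk (φ j) with he
  have he_inj : Function.Injective e := by
    intro i j h
    apply hφinj
    rcases InfinitePlace.mk_eq_iff.mp h with h' | h'
    · exact h'
    · rwa [NumberField.ComplexEmbedding.isReal_iff.mp (htr (φ i))] at h'
  have hreal : ∀ w : InfinitePlace K, InfinitePlace.IsReal w := fun w =>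
    InfinitePlace.isReal_iff.mpr (htr _)
  have hc0 : nrComplexPlaces K = 0 := by
    simp only [nrComplexPlaces, Fintype.card_eq_zero_iff]
    exact ⟨fun w => (not_isReal_iff_isComplex.mpr w.2) (hreal w.1)⟩
  have hcard : Fintype.card (InfinitePlace K) = n := by
    have h1 := card_add_two_mul_card_eq_rank K
    rw [hc0, mul_zero, add_zero, hn] at h1
    rw [InfinitePlace.card_eq_nrRealPlaces_add_nrComplexPlaces, hc0, add_zero, h1]
  have happ : ∀ (j : Fin n) (x : K), (e j) x = |σ j x| := by
    intro j x
    rw [he]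
    simp only [InfinitePlace.apply, hφ, RingHom.coe_comp, Function.comp_apply]
    exact Complex.norm_real _
  set w₁ : InfinitePlace K := e j₀ with hw₁
  -- the constant C
  have hd0 : ‖NumberField.discr K‖₊ ≠ 0 := by
    simpa using NumberField.discr_ne_zero K
  set C : ℝ≥0 := ‖NumberField.discr K‖₊ ^ ((1 : ℝ) / (2 * n - 2)) with hC
  have hCpow : ∀ ε : ℝ≥0, 0 < ε →
      NNReal.sqrt ‖NumberField.discr K‖₊ < (C + ε) ^ (n - 1) := by
    intro ε hε
    have h1 : NNReal.sqrt ‖NumberField.discr K‖₊ = C ^ (n - 1) := by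
      rw [hC, ← NNReal.rpow_natCast (_ ^ _) (n-1), ← NNReal.rpow_mul,
        NNReal.sqrt_eq_rpow]
      congr 1
      have : ((n : ℝ) - 1) = ((n - 1 : ℕ) : ℝ) := by
        push_cast [Nat.cast_sub (by omega : 1 ≤ n)]; ring
      rw [← this]
      have h2 : (2 * (n:ℝ) - 2) ≠ 0 := by
        have : (2:ℝ) ≤ n := by exact_mod_cast hn2
        nlinarith
      have h3 : ((n:ℝ) - 1) ≠ 0 := by
        have : (2:ℝ) ≤ n := by exact_mod_cast hn2
        linarith
      field_simp
    rw [h1]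
    have hClt : C < C + ε := lt_add_of_pos_right _ hε
    exact pow_lt_pow_left₀ hClt zero_le (by omega)
  -- the key existence statement for every ε > 0
  have key : ∀ ε : ℝ≥0, 0 < ε → ∃ a : 𝓞 K, a ≠ 0 ∧
      w₁ (a : K) < 1 ∧ ∀ w : InfinitePlace K, w ≠ w₁ → w (a : K) < ((C + ε : ℝ≥0) : ℝ) := by
    intro ε hε
    have hprod : NNReal.sqrt ‖NumberField.discr K‖₊ <
        ∏ w : InfinitePlace K, (if w = w₁ then 1 else C + ε) := by
      calc NNReal.sqrt ‖NumberField.discr K‖₊ < (C + ε) ^ (n - 1) := hCpow ε hε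
        _ = ∏ w : InfinitePlace K, (if w = w₁ then 1 else C + ε) := by
          rw [← Finset.mul_prod_erase _ _ (Finset.mem_univ w₁), if_pos rfl, one_mul,
            Finset.prod_congr rfl (fun w hw => if_neg (Finset.ne_of_mem_erase hw)),
            Finset.prod_const, Finset.card_erase_of_mem (Finset.mem_univ w₁),
            Finset.card_univ, hcard]
    obtain ⟨a, ha0, ha⟩ := stepA K hreal (fun w => if w = w₁ then 1 else C + ε) hprod
    refine ⟨a, ha0, ?_, ?_⟩
    · have := ha w₁; simpa using this
    · intro w hw; have := ha w; rwa [if_neg hw] at this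
  -- the finite set of candidates
  set S : Set (𝓞 K) := {a | a ≠ 0 ∧ w₁ (a : K) < 1 ∧
      ∀ w : InfinitePlace K, w ≠ w₁ → w (a : K) ≤ (C : ℝ) + 1} with hS
  have hSfin : S.Finite := by
    have hT := NumberField.Embeddings.finite_of_norm_le K ℂ ((C : ℝ) + 1)
    have hcoe : Function.Injective (fun a : 𝓞 K => (a : K)) :=
      fun a b h => RingOfIntegers.ext_iff.mpr h
    refine Set.Finite.of_finite_image ?_ (Set.injOn_of_injective hcoe)
    refine hT.subset ?_
    rintro x ⟨a, ha, rfl⟩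
    refine ⟨RingOfIntegers.isIntegral_coe a, fun ψ => ?_⟩
    have : ‖ψ (a : K)‖ = (InfinitePlace.mk ψ) (a : K) := rfl
    rw [this]
    by_cases hψ : InfinitePlace.mk ψ = w₁
    · rw [hψ]
      have := ha.2.1
      nlinarith [ha.2.1, C.coe_nonneg]
    · exact ha.2.2 _ hψ
  have hSne : S.Nonempty := by
    obtain ⟨a, ha0, h1, h2⟩ := key 1 one_pos
    exact ⟨a, ha0, h1, fun w hw => by
      have := h2 w hw; push_cast at this; exact le_of_lt this⟩
  -- obtain an element with the closed bounds
  have main : ∃ a : 𝓞 K, a ≠ 0 ∧ w₁ (a : K) < 1 ∧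
      ∀ w : InfinitePlace K, w ≠ w₁ → w (a : K) ≤ (C : ℝ) := by
    by_contra hcon
    push_neg at hcon
    have herase : (Finset.univ.erase w₁).Nonempty := by
      rw [← Finset.card_pos, Finset.card_erase_of_mem (Finset.mem_univ w₁),
        Finset.card_univ, hcard]
      omega
    set F : 𝓞 K → ℝ := fun a =>
      Finset.sup' (Finset.univ.erase w₁) herase (fun w => w (a : K)) with hF
    have hFS : ∀ a ∈ S, (C : ℝ) < F a := by
      intro a ha
      obtain ⟨w, hw, hCw⟩ := hcon a ha.1 ha.2.1
      have hwmem : w ∈ Finset.univ.erase w₁ := Finset.mem_erase.mpr ⟨hw, Finset.mem_univ w⟩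
      have hle : w (a : K) ≤ F a := Finset.le_sup' (fun w : NumberField.InfinitePlace K => w (a : K)) hwmem
      have := ha.2.2 w hw
      -- from hcon : ¬(w a ≤ C), i.e. C < w a
      linarith [hCw]
    set m : ℝ := hSfin.toFinset.inf' (by simpa using hSne) F with hm
    have hCm : (C : ℝ) < m := by
      rw [hm, Finset.lt_inf'_iff]
      intro a ha
      exact hFS a (hSfin.mem_toFinset.mp ha)
    set ε : ℝ≥0 := min (Real.toNNReal (m - C)) 1 with hε
    have hεpos : 0 < ε := by
      rw [hε]
      refine lt_min ?_ one_pos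
      rw [Real.toNNReal_pos]
      linarith
    obtain ⟨a, ha0, h1, h2⟩ := key ε hεpos
    have haS : a ∈ S := by
      refine ⟨ha0, h1, fun w hw => ?_⟩
      have := h2 w hw
      have hε1 : (ε : ℝ) ≤ 1 := by
        rw [hε]; exact_mod_cast min_le_right _ _
      push_cast at this
      linarith
    have hma : m ≤ F a := Finset.inf'_le _ (hSfin.mem_toFinset.mpr haS)
    have hFa : F a < (C : ℝ) + ε := by
      rw [hF, Finset.sup'_lt_iff]
      intro w hw
      have := h2 w (Finset.mem_erase.mp hw).1
      push_cast at this
      linarith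
    have hεm : (C : ℝ) + ε ≤ m := by
      have h1' : (ε : ℝ) ≤ m - C := by
        have : ε ≤ Real.toNNReal (m - C) := by rw [hε]; exact min_le_left _ _
        have h2' : ((Real.toNNReal (m - C)) : ℝ) = m - C := Real.coe_toNNReal _ (by linarith)
        calc (ε : ℝ) ≤ (Real.toNNReal (m - C) : ℝ) := by exact_mod_cast this
          _ = m - C := h2'
      linarith
    linarith
  obtain ⟨a, ha0, hw1a, hwa⟩ := main
  -- assemble the answer
  have hsum : (∑ i, b.repr a i • ((b i : K))) = (a : K) := by
    conv_rhs => rw [← b.sum_repr a]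
    rw [RingOfIntegers.coe_eq_algebraMap, map_sum]
    exact Finset.sum_congr rfl fun i _ => (map_zsmul (algebraMap (𝓞 K) K) _ _).symm
  have hCr : (C : ℝ) = |(NumberField.discr K : ℝ)| ^ ((1 : ℝ) / (2 * n - 2)) := by
    rw [hC, NNReal.coe_rpow, coe_nnnorm, Int.norm_eq_abs]
  have him : ∀ j : Fin n, |σ j ((a : K))| = (e j) (a : K) := fun j => (happ j _).symm
  refine ⟨fun i => b.repr a i, ?_, ?_, ?_, ?_⟩
  · intro h
    apply ha0
    have h0 : b.repr a = 0 := by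
      ext i
      exact congrFun h i
    have := b.repr.map_eq_zero_iff.mp h0
    exact this
  · simp only [hsum]
    rw [him j₀]
    exact hw1a
  · intro j hj
    simp only [hsum]
    rw [him j, ← hCr]
    exact hwa (e j) (fun h => hj (he_inj h))
  · intro m hm
    simp only [hsum] at hm
    have h1 : |σ j₀ ((a : K))| < 1 := by rw [him j₀]; exact hw1a
    rw [hm, map_intCast] at h1
    have hm0 : m = 0 := by
      rw [← Int.cast_abs] at h1
      have : |m| < 1 := by exact_mod_cast h1
      rw [abs_lt] at this
      omega
    rw [hm0] at hm
    push_cast at hm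
    exact ha0 (RingOfIntegers.coe_eq_zero_iff.mp (by rw [← RingOfIntegers.coe_eq_algebraMap]; exact hm))
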